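/- Let κ < λ be regular uncountable cardinals. If there exists a simple P_λ-point ultrafilter U on κ (a uniform ultrafilter with a ⊆*-decreasing generating sequence of length λ), then λ = 𝔡_κ = 𝔟_κ = 𝔲_κ = 𝔲^com_κ. In particular, if μ ≠ λ is regular, there is no simple P_μ-point on κ. -/

import Mathlib

open Cardinal Set

namespace PaperFormal

/-- `A` is unbounded in `κ` (as a set of ordinals below `κ`). -/
def UnboundedIn (κ : Ordinal.{0}) (A : Set Ordinal) : Prop :=
  ∀ α < κ, ∃ β ∈ A, α ≤ β

/-- `A ⊆* B`: almost inclusion (mod bounded) below `κ`. -/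
def AlmostSub (κ : Ordinal.{0}) (A B : Set Ordinal) : Prop :=
  ∃ α < κ, ∀ β ∈ A, α ≤ β → β ∈ B

/-- `C` is closed in `κ`. -/
def ClosedIn (κ : Ordinal.{0}) (C : Set Ordinal) : Prop :=
  ∀ α, α < κ → α ≠ 0 → (∀ β < α, (C ∩ Set.Ioo β α).Nonempty) → α ∈ C

/-- `C` is a club (closed unbounded set) in `κ`. -/
def IsClub (κ : Ordinal.{0}) (C : Set Ordinal) : Prop :=
  C ⊆ Set.Iio κ ∧ UnboundedIn κ C ∧ ClosedIn κ C

/-- `f` maps `κ` into `κ`. -/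
def FunOn (κ : Ordinal.{0}) (f : Ordinal → Ordinal) : Prop :=
  ∀ β < κ, f β < κ

/-- almost everywhere domination `f ≤* g` on `κ`. -/
def LeStar (κ : Ordinal.{0}) (f g : Ordinal → Ordinal) : Prop :=
  ∃ α < κ, ∀ β, α ≤ β → β < κ → f β ≤ g β

def UnboundedFunFam (κ : Ordinal.{0}) (𝒜 : Set (Ordinal → Ordinal)) : Prop :=
  (∀ f ∈ 𝒜, FunOn κ f) ∧ ∀ g, FunOn κ g → ∃ f ∈ 𝒜, ¬ LeStar κ f g

def DominatingFunFam (κ : Ordinal.{0}) (𝒜 : Set (Ordinal → Ordinal)) : Prop :=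
  (∀ f ∈ 𝒜, FunOn κ f) ∧ ∀ g, FunOn κ g → ∃ f ∈ 𝒜, LeStar κ g f

/-- the generalized bounding number `𝔟_κ`. -/
noncomputable def bNum (κ : Ordinal.{0}) : Cardinal :=
  sInf { μ : Cardinal.{0} | ∃ 𝒜, UnboundedFunFam κ 𝒜 ∧ #𝒜 = Cardinal.lift.{1} μ }

/-- the generalized dominating number `𝔡_κ`. -/
noncomputable def dNum (κ : Ordinal.{0}) : Cardinal :=
  sInf { μ : Cardinal.{0} | ∃ 𝒜, DominatingFunFam κ 𝒜 ∧ #𝒜 = Cardinal.lift.{1} μ }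

/-- a (proper) filter on `κ`. -/
structure IsKFilter (κ : Ordinal.{0}) (F : Set (Set Ordinal)) : Prop where
  subset : ∀ A ∈ F, A ⊆ Set.Iio κ
  univ_mem : Set.Iio κ ∈ F
  upward : ∀ A ∈ F, ∀ B, B ⊆ Set.Iio κ → A ⊆ B → B ∈ F
  inter : ∀ A ∈ F, ∀ B ∈ F, A ∩ B ∈ F
  proper : ∅ ∉ F

/-- an ultrafilter on `κ`. -/
structure IsKUltrafilter (κ : Ordinal.{0}) (U : Set (Set Ordinal)) extends IsKFilter κ U : Prop where
  decide : ∀ A, A ⊆ Set.Iio κ → A ∈ U ∨ (Set.Iio κ \ A) ∈ U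

/-- uniformity: every member is unbounded (equivalently, for regular `κ`, of size `κ`). -/
def Uniform (κ : Ordinal.{0}) (F : Set (Set Ordinal)) : Prop :=
  ∀ A ∈ F, UnboundedIn κ A

/-- `κ`-completeness. -/
def KComplete (κ : Ordinal.{0}) (F : Set (Set Ordinal)) : Prop :=
  ∀ s : Set (Set Ordinal), s ⊆ F → s.Nonempty → #s < Cardinal.lift.{1} κ.card → ⋂₀ s ∈ F

/-- closure under diagonal intersections. -/
def DiagClosed (κ : Ordinal.{0}) (F : Set (Set Ordinal)) : Prop :=
  ∀ A : Ordinal → Set Ordinal, (∀ i < κ, A i ∈ F) →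
    {β | β < κ ∧ ∀ i < β, β ∈ A i} ∈ F

/-- a normal ultrafilter on `κ`: `κ`-complete, contains all clubs, closed under
diagonal intersections. -/
def NormalUF (κ : Ordinal.{0}) (U : Set (Set Ordinal)) : Prop :=
  IsKUltrafilter κ U ∧ Uniform κ U ∧ KComplete κ U ∧
    (∀ C, IsClub κ C → C ∈ U) ∧ DiagClosed κ U

/-- `ℬ` is a `⊆*`-base for `F`. -/
def IsBase (κ : Ordinal.{0}) (F ℬ : Set (Set Ordinal)) : Prop :=
  ℬ ⊆ F ∧ ∀ A ∈ F, ∃ B ∈ ℬ, AlmostSub κ B A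

/-- the character of a filter. -/
noncomputable def chNum (κ : Ordinal.{0}) (F : Set (Set Ordinal)) : Cardinal :=
  sInf { μ : Cardinal.{0} | ∃ ℬ, IsBase κ F ℬ ∧ #ℬ = Cardinal.lift.{1} μ }

/-- there is a `⊆*`-decreasing `λ`-sequence in `F` with no `⊆*`-lower bound in `F`. -/
def HasTower (κ : Ordinal.{0}) (F : Set (Set Ordinal)) (lam : Cardinal) : Prop :=
  ∃ S : Ordinal → Set Ordinal, (∀ i < lam.ord, S i ∈ F) ∧
    (∀ i j, i < j → j < lam.ord → AlmostSub κ (S j) (S i)) ∧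
    ¬ ∃ Y ∈ F, ∀ i < lam.ord, AlmostSub κ Y (S i)

/-- the depth `𝔱(F)` of a filter. -/
noncomputable def tNum (κ : Ordinal.{0}) (F : Set (Set Ordinal)) : Cardinal :=
  sInf { μ : Cardinal.{0} | μ.IsRegular ∧ HasTower κ F μ }

/-- the ultrafilter number `𝔲_κ`. -/
noncomputable def uNum (κ : Ordinal.{0}) : Cardinal :=
  sInf { μ : Cardinal.{0} | ∃ U, IsKUltrafilter κ U ∧ Uniform κ U ∧ chNum κ U = μ }

/-- the complete ultrafilter number `𝔲^com_κ`. -/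
noncomputable def uComNum (κ : Ordinal.{0}) : Cardinal :=
  sInf { μ : Cardinal.{0} | ∃ U, IsKUltrafilter κ U ∧ Uniform κ U ∧ KComplete κ U ∧ chNum κ U = μ }

/-- `U` is a simple `P_λ`-point: a uniform ultrafilter with a `⊆*`-decreasing
generating sequence of length `λ`. -/
def SimplePPoint (κ : Ordinal.{0}) (lam : Cardinal) (U : Set (Set Ordinal)) : Prop :=
  IsKUltrafilter κ U ∧ Uniform κ U ∧
    ∃ S : Ordinal → Set Ordinal, (∀ i < lam.ord, S i ∈ U) ∧
      (∀ i j, i < j → j < lam.ord → AlmostSub κ (S j) (S i)) ∧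
      ∀ A ∈ U, ∃ i < lam.ord, AlmostSub κ (S i) A

/-- a `⊆*`-decreasing generating sequence of length `λ` for a filter `F`. -/
def SimplePFilter (κ : Ordinal.{0}) (lam : Cardinal) (F : Set (Set Ordinal)) : Prop :=
  ∃ S : Ordinal → Set Ordinal, (∀ i < lam.ord, S i ∈ F) ∧
    (∀ i j, i < j → j < lam.ord → AlmostSub κ (S j) (S i)) ∧
    ∀ A ∈ F, ∃ i < lam.ord, AlmostSub κ (S i) A

/-- `ℬ` is a `π`-base for `U`: unbounded sets, almost contained in members of `U`. -/
def IsPiBase (κ : Ordinal.{0}) (U ℬ : Set (Set Ordinal)) : Prop :=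
  (∀ B ∈ ℬ, B ⊆ Set.Iio κ ∧ UnboundedIn κ B) ∧ ∀ A ∈ U, ∃ B ∈ ℬ, AlmostSub κ B A

/-- the `π`-character `πch(U)`. -/
noncomputable def piChNum (κ : Ordinal.{0}) (U : Set (Set Ordinal)) : Cardinal :=
  sInf { μ : Cardinal.{0} | ∃ ℬ, IsPiBase κ U ℬ ∧ #ℬ = Cardinal.lift.{1} μ }

/-- `Y` is a pseudo-intersection of the family `𝒜`. -/
def IsPseudoInter (κ : Ordinal.{0}) (𝒜 : Set (Set Ordinal)) (Y : Set Ordinal) : Prop :=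
  Y ⊆ Set.Iio κ ∧ UnboundedIn κ Y ∧ ∀ A ∈ 𝒜, AlmostSub κ Y A

/-- `π𝔭(U)`: the least size of a subfamily of `U` with no pseudo-intersection. -/
noncomputable def piPNum (κ : Ordinal.{0}) (U : Set (Set Ordinal)) : Cardinal :=
  sInf { μ : Cardinal.{0} | ∃ 𝒜, 𝒜 ⊆ U ∧ #𝒜 = Cardinal.lift.{1} μ ∧ ¬ ∃ Y, IsPseudoInter κ 𝒜 Y }

/-- a `⊆*`-decreasing `λ`-sequence in `U` unbounded in `([κ]^κ, ⊇*)`. -/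
def HasPiTower (κ : Ordinal.{0}) (U : Set (Set Ordinal)) (lam : Cardinal) : Prop :=
  ∃ S : Ordinal → Set Ordinal, (∀ i < lam.ord, S i ∈ U) ∧
    (∀ i j, i < j → j < lam.ord → AlmostSub κ (S j) (S i)) ∧
    ¬ ∃ Y, Y ⊆ Set.Iio κ ∧ UnboundedIn κ Y ∧ ∀ i < lam.ord, AlmostSub κ Y (S i)

/-- `π𝔱(U)`. -/
noncomputable def piTNum (κ : Ordinal.{0}) (U : Set (Set Ordinal)) : Cardinal :=
  sInf { μ : Cardinal.{0} | μ.IsRegular ∧ HasPiTower κ U μ }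

/-- `A` splits `B`. -/
def Splits (κ : Ordinal.{0}) (A B : Set Ordinal) : Prop :=
  UnboundedIn κ (B ∩ A) ∧ UnboundedIn κ (B \ A)

/-- the splitting number `𝔰_κ`. -/
noncomputable def sNum (κ : Ordinal.{0}) : Cardinal :=
  sInf { μ : Cardinal.{0} | ∃ 𝒜 : Set (Set Ordinal), (∀ A ∈ 𝒜, A ⊆ Set.Iio κ) ∧
    (∀ X, X ⊆ Set.Iio κ → UnboundedIn κ X → ∃ A ∈ 𝒜, Splits κ A X) ∧ #𝒜 = Cardinal.lift.{1} μ }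

/-- the reaping number `𝔯_κ`. -/
noncomputable def rNum (κ : Ordinal.{0}) : Cardinal :=
  sInf { μ : Cardinal.{0} | ∃ 𝒜 : Set (Set Ordinal), (∀ A ∈ 𝒜, A ⊆ Set.Iio κ ∧ UnboundedIn κ A) ∧
    (¬ ∃ X, X ⊆ Set.Iio κ ∧ ∀ A ∈ 𝒜, Splits κ X A) ∧ #𝒜 = Cardinal.lift.{1} μ }

/-- `f` is almost one-to-one modulo `U`: bounded-to-one on a set in `U`. -/
def AlmostInjMod (κ : Ordinal.{0}) (U : Set (Set Ordinal)) (f : Ordinal → Ordinal) : Prop :=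
  ∃ X ∈ U, ∀ γ < κ, ∃ α < κ, ∀ β ∈ X, f β = γ → β < α

/-- the pushforward `f_*(U)`. -/
def PushFwd (κ : Ordinal.{0}) (f : Ordinal → Ordinal) (U : Set (Set Ordinal)) :
    Set (Set Ordinal) :=
  { A | A ⊆ Set.Iio κ ∧ (Set.Iio κ ∩ f ⁻¹' A) ∈ U }

/-- countable completeness. -/
def CountablyComplete (U : Set (Set Ordinal)) : Prop :=
  ∀ s : Set (Set Ordinal), s ⊆ U → s.Countable → s.Nonempty → ⋂₀ s ∈ U



/-! ### Auxiliary machinery -/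

section Aux

lemma almostSub_refl {κo : Ordinal} (h0 : 0 < κo) (A : Set Ordinal) : AlmostSub κo A A :=
  ⟨0, h0, fun _ hβ _ => hβ⟩

lemma almostSub_trans {κo : Ordinal} {A B C : Set Ordinal} (h1 : AlmostSub κo A B)
    (h2 : AlmostSub κo B C) : AlmostSub κo A C := by
  obtain ⟨a1, ha1, h1⟩ := h1; obtain ⟨a2, ha2, h2⟩ := h2
  exact ⟨max a1 a2, max_lt ha1 ha2, fun β hβ hle =>
    h2 β (h1 β hβ ((le_max_left _ _).trans hle)) ((le_max_right _ _).trans hle)⟩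

lemma leStar_trans {κo : Ordinal} {f g h : Ordinal → Ordinal} (h1 : LeStar κo f g)
    (h2 : LeStar κo g h) : LeStar κo f h := by
  obtain ⟨a1, ha1, h1⟩ := h1; obtain ⟨a2, ha2, h2⟩ := h2
  exact ⟨max a1 a2, max_lt ha1 ha2, fun β hle hβ =>
    (h1 β ((le_max_left _ _).trans hle) hβ).trans (h2 β ((le_max_right _ _).trans hle) hβ)⟩

noncomputable def nxt (X : Set Ordinal) (β : Ordinal) : Ordinal := sInf {δ | δ ∈ X ∧ β < δ}

lemma nxt_spec {κo : Ordinal} {X : Set Ordinal} (hX : UnboundedIn κo X) (hlim : Order.IsSuccLimit κo)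
    {β : Ordinal} (hβ : β < κo) : nxt X β ∈ X ∧ β < nxt X β := by
  have hne : {δ | δ ∈ X ∧ β < δ}.Nonempty := by
    obtain ⟨δ, hδ, hge⟩ := hX (β + 1) (by rw [Ordinal.add_one_eq_succ]; exact hlim.succ_lt hβ)
    exact ⟨δ, hδ, lt_of_lt_of_le (by rw [Ordinal.add_one_eq_succ]; exact Order.lt_succ β) hge⟩
  exact csInf_mem hne

lemma nxt_le {X : Set Ordinal} {δ β : Ordinal} (hδ : δ ∈ X) (h : β < δ) : nxt X β ≤ δ :=
  csInf_le' ⟨hδ, h⟩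

lemma exists_bound (c : Cardinal.{0}) (hc : c.IsRegular) (T : Set Ordinal.{0})
    (hT : T ⊆ Iio c.ord) (hcard : #T < Cardinal.lift.{1} c) :
    ∃ b < c.ord, ∀ x ∈ T, x ≤ b := by
  obtain ⟨ν, hν⟩ := Cardinal.mem_range_lift_of_le hcard.le
  have hνc : ν < c := by rwa [← Cardinal.lift_lt.{0,1}, hν]
  have he : Nonempty (ν.ord.ToType ≃ ↥T) := by
    rw [← Cardinal.lift_mk_eq'.{0,1}]
    rw [Cardinal.mk_ord_toType, hν]
    simp
  obtain ⟨e⟩ := he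
  have hsup := Ordinal.iSup_lt_of_lt_cof (f := fun x : ν.ord.ToType => ((e x : ↥T) : Ordinal))
    (a := c.ord) (by rw [hc.cof_eq, Cardinal.mk_ord_toType]; exact hνc)
    (fun i => hT (e i).2)
  refine ⟨_, hsup, fun x hx => ?_⟩
  have : x = ((e (e.symm ⟨x, hx⟩) : ↥T) : Ordinal) := by simp
  rw [this]; exact Ordinal.le_iSup _ _

/-- the set of strong closure points of `g` below `κo`. -/
def clSet (κo : Ordinal.{0}) (g : Ordinal → Ordinal) : Set Ordinal :=
  {δ | δ < κo ∧ 0 < δ ∧ ∀ β < δ, max (g β) β + 1 < δ}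

lemma clSet_sub (κo : Ordinal) (g : Ordinal → Ordinal) : clSet κo g ⊆ Iio κo :=
  fun _ h => h.1

lemma clSet_unbounded {κ : Cardinal.{0}} (hreg : κ.IsRegular) (hunc : ℵ₀ < κ)
    {g : Ordinal → Ordinal} (hg : FunOn κ.ord g) : UnboundedIn κ.ord (clSet κ.ord g) := by
  have hlim : Order.IsSuccLimit κ.ord := Cardinal.isSuccLimit_ord hreg.1
  intro α hα
  set step : Ordinal → Ordinal := fun x => (Ordinal.bsup.{0,0} x (fun β _ => max (g β) β + 1)) + 1 with hstep
  have hstep_lt : ∀ x, x < κ.ord → step x < κ.ord := by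
    intro x hx
    have hb : Ordinal.bsup.{0,0} x (fun β _ => max (g β) β + 1) < κ.ord := by
      apply Ordinal.bsup_lt_ord
      · rw [hreg.cof_eq]; exact Cardinal.lt_ord.1 hx
      · intro β hβ
        have hβκ : β < κ.ord := hβ.trans hx
        have : max (g β) β < κ.ord := max_lt (hg β hβκ) hβκ
        rw [Ordinal.add_one_eq_succ]; exact hlim.succ_lt this
    show _ + 1 < κ.ord
    rw [Ordinal.add_one_eq_succ]; exact hlim.succ_lt hb
  have hstep_gt : ∀ x, x ≤ step x := by
    intro x
    rcases le_or_gt x (Ordinal.bsup.{0,0} x (fun β _ => max (g β) β + 1)) with h | h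
    · exact h.trans (le_of_lt (lt_add_one _))
    · exfalso
      have := Ordinal.le_bsup.{0,0} (fun β (_ : β < x) => max (g β) β + 1) _ h
      have h2 : Ordinal.bsup.{0,0} x (fun β _ => max (g β) β + 1) + 1 ≤ Ordinal.bsup.{0,0} x (fun β _ => max (g β) β + 1) :=
        le_trans (by simpa using (add_le_add_right (le_max_right (g _) _) 1)) this
      exact absurd h2 (by simp)
  set a : ℕ → Ordinal := fun n => Nat.rec (α + 1) (fun _ x => step x) n with ha
  have ha_lt : ∀ n, a n < κ.ord := by
    intro n; induction n with
    | zero => show α + 1 < κ.ord; rw [Ordinal.add_one_eq_succ]; exact hlim.succ_lt hα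
    | succ n ih => exact hstep_lt _ ih
  set δ := iSup a with hδ
  have haδ : ∀ n, a n ≤ δ := fun n => Ordinal.le_iSup a n
  have hδκ : δ < κ.ord := by
    apply Ordinal.iSup_lt_ord
    · rw [hreg.cof_eq, Cardinal.mk_nat]; exact hunc
    · exact ha_lt
  refine ⟨δ, ⟨hδκ, ?_, ?_⟩, ?_⟩
  · exact lt_of_lt_of_le (lt_of_le_of_lt (zero_le : (0:Ordinal) ≤ α) (lt_add_one α)) (haδ 0)
  · intro β hβ
    obtain ⟨n, hn⟩ := Ordinal.lt_iSup_iff.mp hβ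
    have h1 : max (g β) β + 1 ≤ Ordinal.bsup.{0,0} (a n) (fun β _ => max (g β) β + 1) :=
      Ordinal.le_bsup _ _ hn
    calc max (g β) β + 1 ≤ _ := h1
      _ < a (n+1) := lt_add_one _
      _ ≤ δ := haδ (n+1)
  · exact le_trans (le_of_lt (lt_add_one α)) (haδ 0)

lemma clSet_closed {κo : Ordinal} {g : Ordinal → Ordinal} :
    ∀ δ, δ < κo → 0 < δ → (∀ β < δ, ∃ x ∈ clSet κo g, β < x ∧ x < δ) → δ ∈ clSet κo g := by
  intro δ h1 h2 h3
  refine ⟨h1, h2, fun β hβ => ?_⟩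
  obtain ⟨x, hx, hβx, hxδ⟩ := h3 β hβ
  exact (hx.2.2 β hβx).trans hxδ

/-- interleaved sequence of closure points, via the next-function. -/
noncomputable def iseq (h : Ordinal → Ordinal) : Ordinal → Ordinal :=
  Ordinal.lt_wf.fix (fun o IH => h (h (Ordinal.bsup.{0,0} o IH)))

lemma iseq_def (h : Ordinal → Ordinal) (o : Ordinal) :
    iseq h o = h (h (Ordinal.bsup.{0,0} o (fun a _ => iseq h a))) :=
  Ordinal.lt_wf.fix_eq _ o

/-- The splitter: a set `X` splitting every unbounded `B ⊆ κ` whose next-function is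
dominated by `g`. -/
lemma splitter {κ : Cardinal.{0}} (hreg : κ.IsRegular) (hunc : ℵ₀ < κ)
    {g : Ordinal → Ordinal} (hg : FunOn κ.ord g) :
    ∃ X ⊆ Iio κ.ord, ∀ B, B ⊆ Iio κ.ord → UnboundedIn κ.ord B →
      LeStar κ.ord (nxt B) g →
      UnboundedIn κ.ord (B ∩ X) ∧ UnboundedIn κ.ord (B \ X) := by
  have hlim : Order.IsSuccLimit κ.ord := Cardinal.isSuccLimit_ord hreg.1
  set Cl := clSet κ.ord g with hCl
  have hClunb := clSet_unbounded hreg hunc hg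
  have hClsub := clSet_sub κ.ord g
  set nc : Ordinal → Ordinal := fun x => nxt Cl x with hnc
  have hncs : ∀ x, x < κ.ord → nc x ∈ Cl ∧ x < nc x := fun x hx => nxt_spec hClunb hlim hx
  set A : Ordinal → Ordinal := fun o => nc (Ordinal.bsup.{0,0} o (fun a _ => iseq nc a)) with hA
  have hIA : ∀ o, iseq nc o = nc (A o) := fun o => iseq_def nc o
  have key : ∀ o, o < κ.ord → (A o ∈ Cl ∧ iseq nc o ∈ Cl ∧ o ≤ A o ∧ A o < iseq nc o ∧
      iseq nc o < κ.ord ∧ ∀ o' < o, iseq nc o' < A o) := by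
    intro o
    induction o using Ordinal.induction with
    | _ o IH =>
      intro ho
      have hbs : Ordinal.bsup.{0,0} o (fun a _ => iseq nc a) < κ.ord := by
        apply Ordinal.bsup_lt_ord
        · rw [hreg.cof_eq]; exact Cardinal.lt_ord.1 ho
        · intro a ha; exact (IH a ha (ha.trans ho)).2.2.2.2.1
      obtain ⟨hA1, hA2⟩ := hncs _ hbs
      have hAκ : A o < κ.ord := hClsub hA1
      obtain ⟨hI1, hI2⟩ := hncs _ hAκ
      have hIκ : iseq nc o < κ.ord := by rw [hIA]; exact hClsub hI1
      have hprev : ∀ o' < o, iseq nc o' < A o :=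
        fun o' ho' => lt_of_le_of_lt (Ordinal.le_bsup _ o' ho') hA2
      have hoA : o ≤ A o := by
        by_contra hcon
        push_neg at hcon
        obtain ⟨_, _, h3, h4, _, _⟩ := IH (A o) hcon hAκ
        have h5 : iseq nc (A o) ≤ Ordinal.bsup.{0,0} o (fun a _ => iseq nc a) :=
          Ordinal.le_bsup _ (A o) hcon
        exact absurd ((h3.trans_lt h4).trans_le (h5.trans hA2.le)) (lt_irrefl _)
      refine ⟨hA1, by rw [hIA]; exact hI1, hoA, by rw [hIA]; exact hI2, hIκ, hprev⟩
  refine ⟨{x | ∃ o < κ.ord, A o < x ∧ x ≤ nc (A o)}, ?_, ?_⟩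
  · rintro x ⟨o, ho, _, h2⟩
    have := (key o ho).1
    exact lt_of_le_of_lt h2 (hClsub ((hncs _ (hClsub this)).1))
  intro B hBsub hBunb hBle
  obtain ⟨α₀, hα₀κ, hle⟩ := hBle
  have hBn : ∀ c, c < κ.ord → nxt B c ∈ B ∧ c < nxt B c := fun c hc => nxt_spec hBunb hlim hc
  have hgnc : ∀ c, c ∈ Cl → c < κ.ord → g c < nc c := by
    intro c hc hcκ
    obtain ⟨h1, h2⟩ := hncs c hcκ
    have := h1.2.2 c h2
    calc g c ≤ max (g c) c := le_max_left _ _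
      _ < max (g c) c + 1 := lt_add_one _
      _ < nc c := this
  constructor
  · intro α hα
    set o := max α α₀ with ho
    have hoκ : o < κ.ord := max_lt hα hα₀κ
    obtain ⟨hA1, _, hoA, _, _, _⟩ := key o hoκ
    set c := A o with hc
    have hcκ : c < κ.ord := hClsub hA1
    obtain ⟨hb1, hb2⟩ := hBn c hcκ
    have hbg : nxt B c ≤ g c := hle c (le_trans (le_max_right _ _) hoA) hcκ
    have hbX : nxt B c ≤ nc c := le_of_lt (hbg.trans_lt (hgnc c hA1 hcκ))
    exact ⟨nxt B c, ⟨hb1, ⟨o, hoκ, hb2, hbX⟩⟩,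
      le_of_lt (lt_of_le_of_lt (le_trans (le_max_left _ _) hoA) hb2)⟩
  · intro α hα
    set o := max α α₀ with ho
    have hoκ : o < κ.ord := max_lt hα hα₀κ
    obtain ⟨hA1, hI1, hoA, hAI, hIκ, _⟩ := key o hoκ
    set c' := iseq nc o with hc'
    obtain ⟨hb1, hb2⟩ := hBn c' hIκ
    have hbg : nxt B c' ≤ g c' := hle c' (le_trans (le_max_right _ _) (hoA.trans hAI.le)) hIκ
    have hbnc : nxt B c' < nc c' := hbg.trans_lt (hgnc c' hI1 hIκ)
    refine ⟨nxt B c', ⟨hb1, ?_⟩, le_of_lt (lt_of_le_of_lt (le_trans (le_max_left _ _) (hoA.trans hAI.le)) hb2)⟩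
    rintro ⟨o', ho', h1, h2⟩
    obtain ⟨hA1', _, _, hAI', _, hprev'⟩ := key o' ho'
    rcases le_or_gt o' o with hoo | hoo
    · have hAc' : A o' < c' := by
        rcases eq_or_lt_of_le hoo with rfl | hlt'
        · exact hAI
        · exact (hAI'.trans ((key o hoκ).2.2.2.2.2 o' hlt')).trans hAI
      have h3 : nc (A o') ≤ c' := nxt_le hI1 hAc'
      exact absurd (hb2.trans_le (h2.trans h3)) (lt_irrefl _)
    · have hcA : c' < A o' := hprev' o hoo
      have h3 : nc c' ≤ A o' := nxt_le hA1' hcA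
      exact absurd (h1.trans (hbnc.trans_le h3)) (lt_irrefl _)

lemma sinf_helper (lam : Cardinal.{0}) (Sset : Set Cardinal.{0})
    (hlb : ∀ μ ∈ Sset, lam ≤ μ) (hub : ∃ μ ∈ Sset, μ ≤ lam) : lam = sInf Sset := by
  obtain ⟨μ₀, h0, hle⟩ := hub
  have h0' : μ₀ = lam := le_antisymm hle (hlb _ h0)
  refine le_antisymm (le_csInf ⟨μ₀, h0⟩ hlb) ?_
  rw [← h0']
  exact csInf_le' h0

end Aux


/-- The core development: from a simple `P_lam`-point on `κ` (with `κ < lam` both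
regular uncountable) we get the lower bound on all base sizes, and the values of
`𝔡_κ, 𝔟_κ, 𝔲_κ, 𝔲^com_κ`. -/
lemma core {κ lam : Cardinal.{0}} (hreg : κ.IsRegular) (hunc : Cardinal.aleph0 < κ)
    (hlam : lam.IsRegular) (hlamunc : Cardinal.aleph0 < lam) (hlt : κ < lam)
    {U : Set (Set Ordinal)} (hU : SimplePPoint κ.ord lam U) :
    (∀ W, IsKUltrafilter κ.ord W → Uniform κ.ord W → ∀ (ℬ : Set (Set Ordinal)) (ν : Cardinal.{0}), IsBase κ.ord W ℬ →
        #ℬ = Cardinal.lift.{1} ν → lam ≤ ν) ∧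
    lam = dNum κ.ord ∧ lam = bNum κ.ord ∧ lam = uNum κ.ord ∧ lam = uComNum κ.ord := by
  obtain ⟨hUF, hUni, S, hS1, hS2, hS3⟩ := hU
  have hκlim : Order.IsSuccLimit κ.ord := Cardinal.isSuccLimit_ord hreg.1
  have hκpos : (0:Ordinal) < κ.ord := hκlim.pos
  have hκlam : κ.ord < lam.ord := Cardinal.ord_lt_ord.2 hlt
  have hup := hUF.upward
  have hmemsub := hUF.subset
  have hinter := hUF.inter
  have hne : ∀ A ∈ U, A.Nonempty := by
    intro A hA
    rcases Set.eq_empty_or_nonempty A with rfl | h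
    · exact absurd hA hUF.proper
    · exact h
  have hdec : ∀ P : Ordinal → Prop,
      {β | β < κ.ord ∧ P β} ∈ U ∨ {β | β < κ.ord ∧ ¬ P β} ∈ U := by
    intro P
    rcases hUF.decide {β | β < κ.ord ∧ P β} (fun β h => h.1) with h | h
    · exact Or.inl h
    · right
      have heq : Iio κ.ord \ {β | β < κ.ord ∧ P β} = {β | β < κ.ord ∧ ¬ P β} := by
        ext β; simp only [mem_diff, mem_Iio, mem_setOf_eq]; tauto
      rwa [heq] at h
  have hco : ∀ α, α < κ.ord → {β | β < κ.ord ∧ α ≤ β} ∈ U := by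
    intro α hα
    rcases hdec (fun β => α ≤ β) with h | h
    · exact h
    · exfalso
      obtain ⟨β, hβ, hge⟩ := hUni _ h α hα
      exact hβ.2 hge
  have hS2' : ∀ i j, i ≤ j → j < lam.ord → AlmostSub κ.ord (S j) (S i) := by
    intro i j hij hj
    rcases eq_or_lt_of_le hij with rfl | h
    · exact almostSub_refl hκpos _
    · exact hS2 i j h hj
  -- pseudo-intersections of small subfamilies, via the base
  have hpi : ∀ s : Set (Set Ordinal), s ⊆ U → #s < Cardinal.lift.{1} lam →
      ∃ i < lam.ord, ∀ A ∈ s, AlmostSub κ.ord (S i) A := by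
    intro s hsU hscard
    have hch : ∀ A : ↥s, ∃ i, i < lam.ord ∧ AlmostSub κ.ord (S i) A.1 := by
      intro A; obtain ⟨i, hi, ha⟩ := hS3 A.1 (hsU A.2); exact ⟨i, hi, ha⟩
    choose F hF1 hF2 using hch
    obtain ⟨b, hb, hble⟩ := exists_bound lam hlam (range F)
      (by rintro x ⟨A, rfl⟩; exact hF1 A)
      (lt_of_le_of_lt Cardinal.mk_range_le hscard)
    refine ⟨b, hb, fun A hA => ?_⟩
    exact almostSub_trans (hS2' (F ⟨A, hA⟩) b (hble _ ⟨⟨A, hA⟩, rfl⟩) hb) (hF2 ⟨A, hA⟩)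
  -- κ-completeness
  have hKC : KComplete κ.ord U := by
    intro s hsU hsne hscard
    rw [Cardinal.card_ord] at hscard
    obtain ⟨i, hi, hall⟩ := hpi s hsU (hscard.trans (Cardinal.lift_lt.2 hlt))
    have hch : ∀ A : ↥s, ∃ b, b < κ.ord ∧ ∀ β ∈ S i, b ≤ β → β ∈ A.1 := by
      intro A; obtain ⟨b, hb, h⟩ := hall A.1 A.2; exact ⟨b, hb, h⟩
    choose Bd hBd1 hBd2 using hch
    obtain ⟨b, hb, hble⟩ := exists_bound κ hreg (range Bd)
      (by rintro x ⟨A, rfl⟩; exact hBd1 A) (lt_of_le_of_lt Cardinal.mk_range_le hscard)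
    have hZ : S i ∩ {β | β < κ.ord ∧ b ≤ β} ∈ U := hinter _ (hS1 i hi) _ (hco b hb)
    obtain ⟨A₀, hA₀⟩ := hsne
    refine hup _ hZ _ (fun β hβ => (hmemsub A₀ (hsU hA₀)) (Set.mem_sInter.1 hβ A₀ hA₀)) ?_
    rintro β ⟨hβS, hβκ, hbβ⟩
    rw [Set.mem_sInter]
    intro A hA
    exact hBd2 ⟨A, hA⟩ β hβS ((hble _ ⟨⟨A, hA⟩, rfl⟩).trans hbβ)
  -- a < U-minimal unbounded-range function f
  set H : Set (Ordinal → Ordinal) :=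
    {h | (∀ β, h β < κ.ord) ∧ ∀ γ, γ < κ.ord → {β | β < κ.ord ∧ γ < h β} ∈ U} with hH
  have hidH : (fun β => if β < κ.ord then β else 0) ∈ H := by
    constructor
    · intro β; dsimp only; split
      · assumption
      · exact hκpos
    · intro γ hγ
      refine hup _ (hco (γ+1) ?_) _ (fun β h => h.1) ?_
      · rw [Ordinal.add_one_eq_succ]; exact hκlim.succ_lt hγ
      · rintro β ⟨hβκ, hγβ⟩
        refine ⟨hβκ, ?_⟩
        simp only [if_pos hβκ]
        exact lt_of_lt_of_le (lt_add_one γ) hγβ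
  have hmin : ∃ f ∈ H, ∀ h ∈ H, {β | β < κ.ord ∧ h β < f β} ∉ U := by
    by_contra hcon
    push_neg at hcon
    have pick : ∀ x : ↥H, ∃ y : ↥H, {β | β < κ.ord ∧ y.1 β < x.1 β} ∈ U := by
      intro x; obtain ⟨h, hh, hm⟩ := hcon x.1 x.2; exact ⟨⟨h, hh⟩, hm⟩
    choose nextf hnext using pick
    set F : ℕ → ↥H := fun n => Nat.rec ⟨_, hidH⟩ (fun _ x => nextf x) n with hF
    set D : ℕ → Set Ordinal := fun n => {β | β < κ.ord ∧ (F (n+1)).1 β < (F n).1 β} with hD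
    have hDU : ∀ n, D n ∈ U := fun n => hnext (F n)
    have hsint : ⋂₀ (range D) ∈ U := by
      refine hKC _ (by rintro t ⟨n, rfl⟩; exact hDU n) ⟨D 0, 0, rfl⟩ ?_
      have hc1 : #(range D) ≤ ℵ₀ := (countable_range D).le_aleph0
      rw [Cardinal.card_ord]
      refine lt_of_le_of_lt hc1 ?_
      rw [← Cardinal.lift_aleph0.{1,0}]
      exact Cardinal.lift_lt.2 hunc
    obtain ⟨β, hβ⟩ := hne _ hsint
    have hdesc : ∀ n, (F (n+1)).1 β < (F n).1 β :=
      fun n => ((Set.mem_sInter.1 hβ) (D n) ⟨n, rfl⟩).2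
    obtain ⟨x, hx, hmin'⟩ := Ordinal.lt_wf.has_min (range fun n => (F n).1 β) ⟨_, 0, rfl⟩
    obtain ⟨n, rfl⟩ := hx
    exact hmin' _ ⟨n+1, rfl⟩ (hdesc n)
  obtain ⟨f, hfH, hfmin⟩ := hmin
  obtain ⟨hf1, hf2⟩ := hfH
  -- f is ≤ the identity mod U
  have hfle : {β | β < κ.ord ∧ f β ≤ β} ∈ U := by
    rcases hdec (fun β => f β ≤ β) with h | h
    · exact h
    · exfalso
      set h' : Ordinal → Ordinal := fun β => min (f β) (if β < κ.ord then β else 0) with hh'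
      have hh'H : h' ∈ H := by
        constructor
        · intro β; exact lt_of_le_of_lt (min_le_left _ _) (hf1 β)
        · intro γ hγ
          refine hup _ (hinter _ (hf2 γ hγ) _ (hidH.2 γ hγ)) _ (fun β hb => hb.1) ?_
          rintro β ⟨⟨hβκ, hγf⟩, ⟨_, hγi⟩⟩
          exact ⟨hβκ, lt_min hγf hγi⟩
      refine hfmin h' hh'H (hup _ h _ (fun β hb => hb.1) ?_)
      rintro β ⟨hβκ, hnle⟩
      refine ⟨hβκ, ?_⟩
      have hβf : β < f β := lt_of_not_ge hnle
      have heq : h' β = β := by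
        rw [hh']; dsimp only; rw [if_pos hβκ]; exact min_eq_right hβf.le
      rw [heq]; exact hβf
  -- the pushforward of U under f contains every club-like set
  have hfclub : ∀ C : Set Ordinal, C ⊆ Iio κ.ord → UnboundedIn κ.ord C →
      (∀ δ, δ < κ.ord → 0 < δ → (∀ β < δ, ∃ x ∈ C, β < x ∧ x < δ) → δ ∈ C) →
      {β | β < κ.ord ∧ f β ∈ C} ∈ U := by
    intro C hCsub hCunb hCcl
    rcases hdec (fun β => f β ∈ C) with h | h
    · exact h
    · exfalso
      set h' : Ordinal → Ordinal := fun β => sSup {x | x ∈ C ∧ x < f β} with hh'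
      have hbdd : ∀ β, BddAbove {x | x ∈ C ∧ x < f β} :=
        fun β => ⟨f β, fun x hx => le_of_lt hx.2⟩
      have h'le : ∀ β, h' β ≤ f β := by
        intro β
        rcases Set.eq_empty_or_nonempty {x | x ∈ C ∧ x < f β} with he | hne'
        · rw [hh']; dsimp only; rw [he, csSup_empty]; exact zero_le
        · exact csSup_le hne' (fun x hx => hx.2.le)
      have hh'H : h' ∈ H := by
        refine ⟨fun β => lt_of_le_of_lt (h'le β) (hf1 β), ?_⟩
        intro γ hγ
        obtain ⟨hcC, hγc⟩ := nxt_spec hCunb hκlim hγ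
        have hcκ : nxt C γ < κ.ord := hCsub hcC
        refine hup _ (hf2 (nxt C γ) hcκ) _ (fun β hb => hb.1) ?_
        rintro β ⟨hβκ, hcf⟩
        exact ⟨hβκ, lt_of_lt_of_le hγc (le_csSup (hbdd β) ⟨hcC, hcf⟩)⟩
      refine hfmin h' hh'H (hup _ (hinter _ h _ (hf2 0 hκpos)) _ (fun β hb => hb.1) ?_)
      rintro β ⟨⟨hβκ, hfC⟩, ⟨_, hf0⟩⟩
      refine ⟨hβκ, lt_of_le_of_ne (h'le β) ?_⟩
      intro heq
      apply hfC
      have hne' : {x | x ∈ C ∧ x < f β}.Nonempty := by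
        by_contra hcon2
        rw [Set.not_nonempty_iff_eq_empty] at hcon2
        rw [hh'] at heq; dsimp only at heq; rw [hcon2, csSup_empty] at heq
        exact absurd hf0 (by rw [← heq]; exact lt_irrefl _)
      refine hCcl (f β) (hf1 β) hf0 ?_
      intro β' hβ'
      have hβ'' : β' < sSup {x | x ∈ C ∧ x < f β} := by
        rw [hh'] at heq; dsimp only at heq; rw [heq]; exact hβ'
      obtain ⟨x, hx, hβ'x⟩ := exists_lt_of_lt_csSup hne' hβ''
      exact ⟨x, hx.1, hβ'x, hx.2⟩
  -- the canonical λ-family of functions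
  set φ : Ordinal → Ordinal → Ordinal :=
    fun i β => sInf {δ | δ ∈ S i ∧ β < δ ∧ β < f δ} with hφ
  have hTne : ∀ i, i < lam.ord → ∀ β, β < κ.ord →
      (φ i β ∈ S i ∧ β < φ i β ∧ β < f (φ i β)) := by
    intro i hi β hβ
    have h2 := hco (β+1) (by rw [Ordinal.add_one_eq_succ]; exact hκlim.succ_lt hβ)
    have hZ : (S i ∩ ({β' | β' < κ.ord ∧ β+1 ≤ β'} ∩ {β' | β' < κ.ord ∧ β < f β'})) ∈ U :=
      hinter _ (hS1 i hi) _ (hinter _ h2 _ (hf2 β hβ))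
    obtain ⟨δ, hδS, ⟨_, hδ1⟩, ⟨_, hδ2⟩⟩ := hne _ hZ
    exact csInf_mem (s := {δ | δ ∈ S i ∧ β < δ ∧ β < f δ}) ⟨δ, hδS, lt_of_lt_of_le (lt_add_one β) hδ1, hδ2⟩
  have hφFun : ∀ i, i < lam.ord → FunOn κ.ord (φ i) := by
    intro i hi β hβ
    exact hmemsub _ (hS1 i hi) (hTne i hi β hβ).1
  have hφmono : ∀ i j, i ≤ j → j < lam.ord → LeStar κ.ord (φ i) (φ j) := by
    intro i j hij hj
    obtain ⟨b, hbκ, hb⟩ := hS2' i j hij hj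
    refine ⟨b, hbκ, fun β hbβ hβκ => ?_⟩
    refine csInf_le_csInf (OrderBot.bddBelow _)
      ⟨φ j β, (hTne j hj β hβκ).1, (hTne j hj β hβκ).2.1, (hTne j hj β hβκ).2.2⟩ ?_
    rintro δ ⟨hδS, hβδ, hβf⟩
    exact ⟨hb δ hδS (le_of_lt (lt_of_le_of_lt hbβ hβδ)), hβδ, hβf⟩
  have hφdom : ∀ g, FunOn κ.ord g → ∃ i, i < lam.ord ∧ LeStar κ.ord g (φ i) := by
    intro g hg
    have hA1 : {β | β < κ.ord ∧ f β ∈ clSet κ.ord g} ∈ U :=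
      hfclub _ (clSet_sub κ.ord g) (clSet_unbounded hreg hunc hg) clSet_closed
    have hA : ({β | β < κ.ord ∧ f β ∈ clSet κ.ord g} ∩ {β | β < κ.ord ∧ f β ≤ β}) ∈ U :=
      hinter _ hA1 _ hfle
    obtain ⟨i, hi, α₀, hα₀κ, hα₀⟩ := hS3 _ hA
    refine ⟨i, hi, α₀, hα₀κ, fun β hαβ hβκ => ?_⟩
    obtain ⟨hmem, hβδ, hβf⟩ := hTne i hi β hβκ
    obtain ⟨⟨_, hfCl⟩, ⟨_, hfle'⟩⟩ := hα₀ _ hmem (le_of_lt (lt_of_le_of_lt hαβ hβδ))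
    have hcl := hfCl.2.2 β hβf
    refine le_of_lt ?_
    calc g β ≤ max (g β) β := le_max_left _ _
      _ < max (g β) β + 1 := lt_add_one _
      _ < f (φ i β) := hcl
      _ ≤ φ i β := hfle'
  -- every < λ-sized family of functions is bounded
  have hbound : ∀ 𝒜 : Set (Ordinal → Ordinal), (∀ h ∈ 𝒜, FunOn κ.ord h) →
      #𝒜 < Cardinal.lift.{1} lam → ∃ h, FunOn κ.ord h ∧ ∀ g ∈ 𝒜, LeStar κ.ord g h := by
    intro 𝒜 hall hcard
    have hch : ∀ g : ↥𝒜, ∃ i, i < lam.ord ∧ LeStar κ.ord g.1 (φ i) :=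
      fun g => hφdom g.1 (hall g.1 g.2)
    choose F h1 h2 using hch
    obtain ⟨b, hb, hble⟩ := exists_bound lam hlam (range F) (by rintro x ⟨g, rfl⟩; exact h1 g)
      (lt_of_le_of_lt Cardinal.mk_range_le hcard)
    exact ⟨φ b, hφFun b hb, fun g hg =>
      leStar_trans (h2 ⟨g, hg⟩) (hφmono _ b (hble _ ⟨⟨g, hg⟩, rfl⟩) hb)⟩
  -- L1: every base of a uniform ultrafilter has size at least λ
  have hL1 : ∀ W, IsKUltrafilter κ.ord W → Uniform κ.ord W → ∀ (ℬ : Set (Set Ordinal)) (ν : Cardinal.{0}), IsBase κ.ord W ℬ →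
      #ℬ = Cardinal.lift.{1} ν → lam ≤ ν := by
    intro W hW hWuni ℬ ν hbase hcard
    by_contra hνlam
    push_neg at hνlam
    have hBfacts : ∀ B ∈ ℬ, B ⊆ Iio κ.ord ∧ UnboundedIn κ.ord B := fun B hB =>
      ⟨hW.subset B (hbase.1 hB), hWuni B (hbase.1 hB)⟩
    have hfam : ∀ h ∈ nxt '' ℬ, FunOn κ.ord h := by
      rintro h ⟨B, hB, rfl⟩
      intro β hβ
      exact (hBfacts B hB).1 ((nxt_spec (hBfacts B hB).2 hκlim hβ).1)
    obtain ⟨g, hgF, hgall⟩ := hbound (nxt '' ℬ) hfam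
      (lt_of_le_of_lt Cardinal.mk_image_le (by rw [hcard]; exact Cardinal.lift_lt.2 hνlam))
    obtain ⟨X, hXsub, hXsplit⟩ := splitter hreg hunc hgF
    rcases hW.decide X hXsub with hXW | hXW
    · obtain ⟨B₀, hB₀, α, hακ, hα⟩ := hbase.2 X hXW
      obtain ⟨hB₀sub, hB₀unb⟩ := hBfacts B₀ hB₀
      obtain ⟨_, hsp2⟩ := hXsplit B₀ hB₀sub hB₀unb (hgall _ ⟨B₀, hB₀, rfl⟩)
      obtain ⟨β, hβmem, hαβ⟩ := hsp2 α hακ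
      exact hβmem.2 (hα β hβmem.1 hαβ)
    · obtain ⟨B₀, hB₀, α, hακ, hα⟩ := hbase.2 _ hXW
      obtain ⟨hB₀sub, hB₀unb⟩ := hBfacts B₀ hB₀
      obtain ⟨hsp1, _⟩ := hXsplit B₀ hB₀sub hB₀unb (hgall _ ⟨B₀, hB₀, rfl⟩)
      obtain ⟨β, hβmem, hαβ⟩ := hsp1 α hακ
      exact (hα β hβmem.1 hαβ).2 hβmem.2
  -- the canonical family is dominating and unbounded
  have hφfam : DominatingFunFam κ.ord (φ '' Iio lam.ord) := by
    constructor
    · rintro h ⟨i, hi, rfl⟩; exact hφFun i hi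
    · intro g hg
      obtain ⟨i, hi, h⟩ := hφdom g hg
      exact ⟨φ i, ⟨i, hi, rfl⟩, h⟩
  have hφcard : ∃ μ₀, μ₀ ≤ lam ∧ #(φ '' Iio lam.ord) = Cardinal.lift.{1} μ₀ := by
    have h1 : #(φ '' Iio lam.ord) ≤ Cardinal.lift.{1} lam := by
      calc #(φ '' Iio lam.ord) ≤ #(Iio lam.ord) := Cardinal.mk_image_le
        _ = Cardinal.lift.{1} lam := by rw [Ordinal.mk_Iio_ordinal, Cardinal.card_ord]
    obtain ⟨μ₀, hμ₀⟩ := Cardinal.mem_range_lift_of_le h1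
    refine ⟨μ₀, ?_, hμ₀.symm⟩
    rw [← Cardinal.lift_le.{1,0}, hμ₀]; exact h1
  have hsuccF : ∀ g : Ordinal → Ordinal, FunOn κ.ord g → FunOn κ.ord (fun β => g β + 1) := by
    intro g hg β hβ
    dsimp only
    rw [Ordinal.add_one_eq_succ]; exact hκlim.succ_lt (hg β hβ)
  have hnotle : ∀ (h g : Ordinal → Ordinal), LeStar κ.ord h g →
      LeStar κ.ord (fun β => g β + 1) h → False := by
    rintro h g ⟨a1, ha1, hle1⟩ ⟨a2, ha2, hle2⟩
    have hβκ : max a1 a2 < κ.ord := max_lt ha1 ha2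
    have h1 := hle1 (max a1 a2) (le_max_left _ _) hβκ
    have h2 := hle2 (max a1 a2) (le_max_right _ _) hβκ
    exact absurd (h2.trans h1) (not_le.2 (lt_add_one _))
  -- dNum
  have hdNum : lam = dNum κ.ord := by
    rw [dNum]
    apply sinf_helper
    · rintro μ ⟨𝒜, hdom, hcard⟩
      by_contra hcon
      push_neg at hcon
      obtain ⟨h, hhF, hall⟩ := hbound 𝒜 hdom.1
        (by rw [hcard]; exact Cardinal.lift_lt.2 hcon)
      obtain ⟨q, hq𝒜, hq⟩ := hdom.2 _ (hsuccF h hhF)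
      exact hnotle q h (hall q hq𝒜) hq
    · obtain ⟨μ₀, hμ₀le, hμ₀⟩ := hφcard
      exact ⟨μ₀, ⟨_, hφfam, hμ₀⟩, hμ₀le⟩
  -- bNum
  have hbNum : lam = bNum κ.ord := by
    rw [bNum]
    apply sinf_helper
    · rintro μ ⟨𝒜, hunb, hcard⟩
      by_contra hcon
      push_neg at hcon
      obtain ⟨h, hhF, hall⟩ := hbound 𝒜 hunb.1
        (by rw [hcard]; exact Cardinal.lift_lt.2 hcon)
      obtain ⟨q, hq𝒜, hq⟩ := hunb.2 h hhF
      exact hq (hall q hq𝒜)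
    · obtain ⟨μ₀, hμ₀le, hμ₀⟩ := hφcard
      refine ⟨μ₀, ⟨_, ⟨hφfam.1, ?_⟩, hμ₀⟩, hμ₀le⟩
      intro g hg
      obtain ⟨i, hi, h⟩ := hφdom _ (hsuccF g hg)
      exact ⟨φ i, ⟨i, hi, rfl⟩, fun hcon => hnotle (φ i) g hcon h⟩
  -- chNum U = lam
  have hchU : chNum κ.ord U = lam := by
    rw [chNum]
    refine (sinf_helper _ _ ?_ ?_).symm
    · rintro μ ⟨ℬ, hbase, hcard⟩
      exact hL1 U hUF hUni ℬ μ hbase hcard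
    · have hbase : IsBase κ.ord U (S '' Iio lam.ord) := by
        constructor
        · rintro B ⟨i, hi, rfl⟩; exact hS1 i hi
        · intro A hA
          obtain ⟨i, hi, h⟩ := hS3 A hA
          exact ⟨S i, ⟨i, hi, rfl⟩, h⟩
      have h1 : #(S '' Iio lam.ord) ≤ Cardinal.lift.{1} lam := by
        calc #(S '' Iio lam.ord) ≤ #(Iio lam.ord) := Cardinal.mk_image_le
          _ = Cardinal.lift.{1} lam := by rw [Ordinal.mk_Iio_ordinal, Cardinal.card_ord]
      obtain ⟨μ₀, hμ₀⟩ := Cardinal.mem_range_lift_of_le h1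
      refine ⟨μ₀, ⟨_, hbase, hμ₀.symm⟩, ?_⟩
      rw [← Cardinal.lift_le.{1,0}, hμ₀]; exact h1
  -- every ultrafilter has *some* base cardinality
  have hWcard : ∀ W : Set (Set Ordinal), IsKUltrafilter κ.ord W →
      ∃ ν : Cardinal.{0}, #W = Cardinal.lift.{1} ν := by
    intro W hW
    have hinj : Function.Injective
        (fun A : ↥W => {x : ↥(Iio κ.ord) | (x : Ordinal) ∈ (A : Set Ordinal)}) := by
      intro A B hAB
      apply Subtype.ext
      have hsub : ∀ A' B' : ↥W,
          {x : ↥(Iio κ.ord) | (x : Ordinal) ∈ (A' : Set Ordinal)} =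
            {x : ↥(Iio κ.ord) | (x : Ordinal) ∈ (B' : Set Ordinal)} →
          (A' : Set Ordinal) ⊆ (B' : Set Ordinal) := by
        intro A' B' h x hx
        have hxκ : x ∈ Iio κ.ord := hW.subset _ A'.2 hx
        have hmem : (⟨x, hxκ⟩ : ↥(Iio κ.ord)) ∈
            {x : ↥(Iio κ.ord) | (x : Ordinal) ∈ (A' : Set Ordinal)} := hx
        rw [h] at hmem
        exact hmem
      exact le_antisymm (hsub A B hAB) (hsub B A hAB.symm)
    have h1 : #W ≤ Cardinal.lift.{1} (2 ^ κ) := by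
      calc #W ≤ #(Set (↥(Iio κ.ord))) := Cardinal.mk_le_of_injective hinj
        _ = 2 ^ #(↥(Iio κ.ord)) := Cardinal.mk_set
        _ = 2 ^ Cardinal.lift.{1} κ := by rw [Ordinal.mk_Iio_ordinal, Cardinal.card_ord]
        _ = Cardinal.lift.{1} (2 ^ κ) := by rw [Cardinal.lift_power.{0,1}, Cardinal.lift_two.{1,0}]
    obtain ⟨ν, hν⟩ := Cardinal.mem_range_lift_of_le h1
    exact ⟨ν, hν.symm⟩
  have hchW : ∀ W, IsKUltrafilter κ.ord W → Uniform κ.ord W → lam ≤ chNum κ.ord W := by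
    intro W hW hWu
    have hWne : {μ : Cardinal.{0} | ∃ ℬ, IsBase κ.ord W ℬ ∧ #ℬ = Cardinal.lift.{1} μ}.Nonempty := by
      obtain ⟨ν, hν⟩ := hWcard W hW
      exact ⟨ν, W, ⟨fun A hA => hA, fun A hA => ⟨A, hA, almostSub_refl hκpos A⟩⟩, hν⟩
    obtain ⟨ℬ, hbase, hcard⟩ := csInf_mem hWne
    exact hL1 W hW hWu ℬ _ hbase hcard
  have huNum : lam = uNum κ.ord := by
    rw [uNum]
    apply sinf_helper
    · rintro μ ⟨W, hW, hWu, rfl⟩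
      exact hchW W hW hWu
    · exact ⟨lam, ⟨U, hUF, hUni, hchU⟩, le_refl lam⟩
  have hucNum : lam = uComNum κ.ord := by
    rw [uComNum]
    apply sinf_helper
    · rintro μ ⟨W, hW, hWu, _, rfl⟩
      exact hchW W hW hWu
    · exact ⟨lam, ⟨U, hUF, hUni, hKC, hchU⟩, le_refl lam⟩
  exact ⟨hL1, hdNum, hbNum, huNum, hucNum⟩

/-- if `κ < λ` are regular uncountable and there is a simple `P_λ`-point
on `κ`, then `λ = 𝔡_κ = 𝔟_κ = 𝔲_κ = 𝔲^com_κ`; in particular there is no simple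
`P_μ`-point on `κ` for regular `μ ≠ λ`. -/
theorem stmt6 (κ lam : Cardinal.{0}) (hreg : κ.IsRegular) (hunc : Cardinal.aleph0 < κ)
    (hlam : lam.IsRegular) (hlamunc : Cardinal.aleph0 < lam) (hlt : κ < lam)
    (U : Set (Set Ordinal)) (hU : SimplePPoint κ.ord lam U) :
    lam = dNum κ.ord ∧ lam = bNum κ.ord ∧ lam = uNum κ.ord ∧ lam = uComNum κ.ord ∧
    ∀ μ : Cardinal.{0}, μ.IsRegular → μ ≠ lam → ¬ ∃ W, SimplePPoint κ.ord μ W := by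
  obtain ⟨hL1, hd, hb, hu, huc⟩ := core hreg hunc hlam hlamunc hlt hU
  refine ⟨hd, hb, hu, huc, ?_⟩
  rintro μ hμreg hμne ⟨W, hW⟩
  rcases lt_trichotomy μ lam with hμlt | heq | hμgt
  · obtain ⟨hWU, hWuni, T, hT1, hT2, hT3⟩ := hW
    have hbase : IsBase κ.ord W (T '' Iio μ.ord) := by
      constructor
      · rintro B ⟨i, hi, rfl⟩; exact hT1 i hi
      · intro A hA
        obtain ⟨i, hi, h⟩ := hT3 A hA
        exact ⟨T i, ⟨i, hi, rfl⟩, h⟩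
    have h1 : #(T '' Iio μ.ord) ≤ Cardinal.lift.{1} μ := by
      calc #(T '' Iio μ.ord) ≤ #(Iio μ.ord) := Cardinal.mk_image_le
        _ = Cardinal.lift.{1} μ := by rw [Ordinal.mk_Iio_ordinal, Cardinal.card_ord]
    obtain ⟨ν, hν⟩ := Cardinal.mem_range_lift_of_le h1
    have hνμ : ν ≤ μ := by rw [← Cardinal.lift_le.{1,0}, hν]; exact h1
    have hlamν := hL1 W hWU hWuni _ ν hbase hν.symm
    exact absurd ((hlamν.trans hνμ).trans_lt hμlt) (lt_irrefl lam)
  · exact hμne heq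
  · have hbμ := (core hreg hunc hμreg (hlamunc.trans hμgt) (hlt.trans hμgt) hW).2.2.1
    exact hμne (hbμ.trans hb.symm)

end PaperFormal
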